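/- arXiv:math-ph/0504068 — 2 statements merged into one kernel-verified Lean document; each statement's English description precedes it below -/
import Mathlib

section
/- For fixed Q ∈ ℕ, β > 0, t > 0, the Legendre transform π^*_{Q,λ}(t) = sup_{y<0}(t·y - π_{Q,λ}(y)) is a decreasing function of λ ≥ 0; indeed its derivative in λ equals -Σ_{q=1}^{Q} e^{β(y_{Q,λ}(t)+λ)q} < 0, where y_{Q,λ}(t) is the unique solution of t = π'_{Q,λ}(y). -/
open Set
open scoped BigOperators

noncomputable def piQ (β lam : ℝ) (Q : ℕ) (y : ℝ) : ℝ :=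
  (∑ q ∈ Finset.Icc 1 Q, Real.exp (β * (y + lam) * q) / (β * q)) +
  ∑' q : ℕ, Real.exp (β * y * ((q + Q + 1 : ℕ) : ℝ)) / (β * ((q + Q + 1 : ℕ) : ℝ))

noncomputable def piQ' (β lam : ℝ) (Q : ℕ) (y : ℝ) : ℝ :=
  (∑ q ∈ Finset.Icc 1 Q, Real.exp (β * (y + lam) * q)) +
  ∑' q : ℕ, Real.exp (β * y * ((q + Q + 1 : ℕ) : ℝ))

open Real Filter
open scoped Topology

namespace PiQAux

noncomputable def psi (β : ℝ) (Q : ℕ) (l y : ℝ) : ℝ :=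
  (∑ q ∈ Finset.Icc 1 Q, Real.exp (β * (y + l) * q)) +
  Real.exp (β * y) ^ (Q + 1) / (1 - Real.exp (β * y))

noncomputable def PP (β : ℝ) (Q : ℕ) (l y : ℝ) : ℝ :=
  (∑ q ∈ Finset.Icc 1 Q, Real.exp (β * (y + l) * q) / (β * q)) +
  (1 / β) * (-(Real.log (1 - Real.exp (β * y))) -
    ∑ q ∈ Finset.range Q, Real.exp (β * y) ^ (q + 1) / ((q : ℝ) + 1))

variable {β : ℝ} {Q : ℕ}

lemma exp_lt_one {y : ℝ} (hβ : 0 < β) (hy : y < 0) : Real.exp (β * y) < 1 := by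
  rw [Real.exp_lt_one_iff]
  exact mul_neg_of_pos_of_neg hβ hy

lemma term_eq (y : ℝ) (q : ℕ) :
    Real.exp (β * y * ((q + Q + 1 : ℕ) : ℝ)) = Real.exp (β * y) ^ (Q + 1) * Real.exp (β * y) ^ q := by
  rw [← pow_add, ← Real.exp_nat_mul]
  push_cast
  ring_nf

lemma tail_hasSum {y : ℝ} (hβ : 0 < β) (hy : y < 0) :
    HasSum (fun q : ℕ => Real.exp (β * y * ((q + Q + 1 : ℕ) : ℝ)))
      (Real.exp (β * y) ^ (Q + 1) / (1 - Real.exp (β * y))) := by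
  have h := (hasSum_geometric_of_lt_one (Real.exp_pos _).le (exp_lt_one hβ hy)).mul_left
    (Real.exp (β * y) ^ (Q + 1))
  rw [div_eq_mul_inv]
  exact h.congr_fun fun q => (term_eq y q).symm ▸ rfl

lemma tail_hasSum_div {y : ℝ} (hβ : 0 < β) (hy : y < 0) :
    HasSum (fun q : ℕ => Real.exp (β * y * ((q + Q + 1 : ℕ) : ℝ)) / (β * ((q + Q + 1 : ℕ) : ℝ)))
      ((1 / β) * (-(Real.log (1 - Real.exp (β * y))) -
        ∑ q ∈ Finset.range Q, Real.exp (β * y) ^ (q + 1) / ((q : ℝ) + 1))) := by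
  have hx : |Real.exp (β * y)| < 1 := by
    rw [abs_of_pos (Real.exp_pos _)]; exact exp_lt_one hβ hy
  have h := Real.hasSum_pow_div_log_of_abs_lt_one hx
  have h2 : HasSum (fun n : ℕ => Real.exp (β * y) ^ (n + Q + 1) / ((n : ℝ) + Q + 1))
      (-(Real.log (1 - Real.exp (β * y))) -
        ∑ q ∈ Finset.range Q, Real.exp (β * y) ^ (q + 1) / ((q : ℝ) + 1)) := by
    have := (hasSum_nat_add_iff (f := fun n : ℕ => Real.exp (β * y) ^ (n + 1) / ((n : ℝ) + 1)) Q
      (g := -(Real.log (1 - Real.exp (β * y))) -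
        ∑ q ∈ Finset.range Q, Real.exp (β * y) ^ (q + 1) / ((q : ℝ) + 1))).2
    simp only [sub_add_cancel] at this
    have h3 := this h
    refine h3.congr_fun fun n => ?_
    push_cast
    ring_nf
  have h4 := h2.mul_left (1 / β)
  refine h4.congr_fun fun n => ?_
  have hn : ((n + Q + 1 : ℕ) : ℝ) = (n : ℝ) + Q + 1 := by push_cast; ring
  rw [hn, ← Real.exp_nat_mul]
  have : ((n + Q + 1 : ℕ) : ℝ) * (β * y) = β * y * ((n + Q + 1 : ℕ) : ℝ) := by ring
  rw [this, hn]
  field_simp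

lemma piQ'_eq_psi (lam : ℝ) {y : ℝ} (hβ : 0 < β) (hy : y < 0) :
    ((∑ q ∈ Finset.Icc 1 Q, Real.exp (β * (y + lam) * q)) +
      ∑' q : ℕ, Real.exp (β * y * ((q + Q + 1 : ℕ) : ℝ))) = psi β Q lam y := by
  unfold psi
  rw [(tail_hasSum hβ hy).tsum_eq]

lemma piQ_eq_PP (lam : ℝ) {y : ℝ} (hβ : 0 < β) (hy : y < 0) :
    ((∑ q ∈ Finset.Icc 1 Q, Real.exp (β * (y + lam) * q) / (β * q)) +
      ∑' q : ℕ, Real.exp (β * y * ((q + Q + 1 : ℕ) : ℝ)) / (β * ((q + Q + 1 : ℕ) : ℝ))) = PP β Q lam y := by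
  unfold PP
  rw [(tail_hasSum_div hβ hy).tsum_eq]


lemma hasDerivAt_expdiv (hβ : 0 < β) {q : ℕ} (hq : q ∈ Finset.Icc 1 Q) (y0 z : ℝ) :
    HasDerivAt (fun s => Real.exp (β * (y0 + s) * q) / (β * q))
      (Real.exp (β * (y0 + z) * q)) z := by
  have hq1 : (1:ℝ) ≤ (q:ℝ) := by exact_mod_cast (Finset.mem_Icc.1 hq).1
  have hqpos : (0:ℝ) < (q:ℝ) := lt_of_lt_of_le one_pos hq1
  have h := ((((hasDerivAt_id z).const_add y0).const_mul β).mul_const (q:ℝ)).exp.div_const (β*q)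
  refine h.congr_deriv ?_
  simp only [id]
  field_simp

lemma hasDerivAt_expdiv' (hβ : 0 < β) {q : ℕ} (hq : q ∈ Finset.Icc 1 Q) (l z : ℝ) :
    HasDerivAt (fun y => Real.exp (β * (y + l) * q) / (β * q))
      (Real.exp (β * (z + l) * q)) z := by
  have hq1 : (1:ℝ) ≤ (q:ℝ) := by exact_mod_cast (Finset.mem_Icc.1 hq).1
  have hqpos : (0:ℝ) < (q:ℝ) := lt_of_lt_of_le one_pos hq1
  have h := ((((hasDerivAt_id z).add_const l).const_mul β).mul_const (q:ℝ)).exp.div_const (β*q)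
  refine h.congr_deriv ?_
  simp only [id]
  field_simp

lemma hasDerivAt_PP (hβ : 0 < β) (l : ℝ) {y : ℝ} (hy : y < 0) :
    HasDerivAt (PP β Q l) (psi β Q l y) y := by
  have hx0 : 0 < Real.exp (β*y) := Real.exp_pos _
  have hx1 : Real.exp (β*y) < 1 := exp_lt_one hβ hy
  have hd : 1 - Real.exp (β*y) ≠ 0 := by linarith
  have h1 : HasDerivAt (fun y => ∑ q ∈ Finset.Icc 1 Q, Real.exp (β*(y+l)*q)/(β*q))
      (∑ q ∈ Finset.Icc 1 Q, Real.exp (β*(y+l)*q)) y :=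
    HasDerivAt.fun_sum fun q hq => hasDerivAt_expdiv' hβ hq l y
  have hexp : HasDerivAt (fun y => Real.exp (β*y)) (Real.exp (β*y) * β) y := by
    have := ((hasDerivAt_id y).const_mul β).exp
    simpa using this
  have hlog : HasDerivAt (fun y => Real.log (1 - Real.exp (β*y)))
      ((-(Real.exp (β*y) * β))/(1 - Real.exp (β*y))) y := (hexp.const_sub 1).log hd
  have h3 : HasDerivAt (fun y => ∑ q ∈ Finset.range Q, Real.exp (β*y)^(q+1)/((q:ℝ)+1))
      (∑ q ∈ Finset.range Q, Real.exp (β*y)^(q+1) * β) y := by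
    apply HasDerivAt.fun_sum
    intro q _
    have hq0 : ((q:ℝ)+1) ≠ 0 := by positivity
    have := (hexp.pow (q+1)).div_const ((q:ℝ)+1)
    refine this.congr_deriv ?_
    push_cast
    field_simp
    ring
  have h2 := ((hlog.neg).sub h3).const_mul (1/β)
  have hgeom : ∑ q ∈ Finset.range Q, Real.exp (β*y)^(q+1)
      = Real.exp (β*y) * ((Real.exp (β*y)^Q - 1)/(Real.exp (β*y) - 1)) := by
    rw [← geom_sum_eq (ne_of_lt hx1), Finset.mul_sum]
    exact Finset.sum_congr rfl fun q _ => by ring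
  have htot := h1.add h2
  have : psi β Q l y = (∑ q ∈ Finset.Icc 1 Q, Real.exp (β*(y+l)*q)) +
      1/β * (-(-(Real.exp (β*y) * β) / (1 - Real.exp (β*y))) -
        ∑ q ∈ Finset.range Q, Real.exp (β*y)^(q+1) * β) := by
    unfold psi
    congr 1
    rw [← Finset.sum_mul, hgeom]
    have hd2 : Real.exp (β*y) - 1 ≠ 0 := by linarith
    have hβ' : β ≠ 0 := ne_of_gt hβ
    field_simp
    ring
  rw [this]
  exact htot

lemma psi_strictMonoOn (hβ : 0 < β) (hQ : 1 ≤ Q) (l : ℝ) : StrictMonoOn (psi β Q l) (Iio 0) := by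
  intro y1 h1 y2 h2 h12
  have hy1 : y1 < 0 := h1
  have hy2 : y2 < 0 := h2
  unfold psi
  have hsum : ∑ q ∈ Finset.Icc 1 Q, Real.exp (β*(y1+l)*q)
      < ∑ q ∈ Finset.Icc 1 Q, Real.exp (β*(y2+l)*q) := by
    apply Finset.sum_lt_sum_of_nonempty (Finset.nonempty_Icc.2 hQ)
    intro q hq
    have hq1 : (1:ℝ) ≤ (q:ℝ) := by exact_mod_cast (Finset.mem_Icc.1 hq).1
    have hqpos : (0:ℝ) < (q:ℝ) := by linarith
    exact Real.exp_lt_exp.2 (by nlinarith [mul_pos (mul_pos hβ (sub_pos.2 h12)) hqpos])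
  have e1 : Real.exp (β*y1) < Real.exp (β*y2) := Real.exp_lt_exp.2 (by nlinarith)
  have e2 : Real.exp (β*y2) < 1 := exp_lt_one hβ hy2
  have htail : Real.exp (β*y1)^(Q+1)/(1-Real.exp (β*y1))
      ≤ Real.exp (β*y2)^(Q+1)/(1-Real.exp (β*y2)) :=
    div_le_div₀ (by positivity) (pow_le_pow_left₀ (Real.exp_pos _).le e1.le _)
      (by linarith) (by linarith)
  linarith

lemma psi_cont (y0 : ℝ) : Continuous fun l => psi β Q l y0 := by
  unfold psi
  apply Continuous.add _ continuous_const
  exact continuous_finset_sum _ fun q _ => by fun_prop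


noncomputable def FF (β : ℝ) (Q : ℕ) (s y : ℝ) : ℝ :=
  ∑ q ∈ Finset.Icc 1 Q, Real.exp (β * (y + s) * q) / (β * q)

lemma div_le_div_of_neg {a b c : ℝ} (hc : c < 0) (h : a ≤ b) : b / c ≤ a / c := by
  rw [div_eq_mul_inv, div_eq_mul_inv]
  exact mul_le_mul_of_nonpos_right h (inv_nonpos.2 hc.le)

lemma piQ_eq_PP' (lam : ℝ) {y : ℝ} (hβ : 0 < β) (hy : y < 0) :
    piQ β lam Q y = PP β Q lam y := by
  rw [piQ]; exact piQ_eq_PP lam hβ hy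

lemma piQ'_eq_psi' (lam : ℝ) {y : ℝ} (hβ : 0 < β) (hy : y < 0) :
    piQ' β lam Q y = psi β Q lam y := by
  rw [piQ']; exact piQ'_eq_psi lam hβ hy

lemma piQ_sub (lam μ y : ℝ) :
    piQ β lam Q y - piQ β μ Q y = FF β Q lam y - FF β Q μ y := by
  simp only [piQ, FF]; ring

lemma hasDerivAt_piQ (hβ : 0 < β) (l : ℝ) {y : ℝ} (hy : y < 0) :
    HasDerivAt (fun z => piQ β l Q z) (psi β Q l y) y := by
  apply (hasDerivAt_PP hβ l hy).congr_of_eventuallyEq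
  filter_upwards [Iio_mem_nhds hy] with z hz
  exact piQ_eq_PP' l hβ hz

lemma hasDerivAt_FF (hβ : 0 < β) (c l : ℝ) :
    HasDerivAt (fun s => FF β Q s c) (∑ q ∈ Finset.Icc 1 Q, Real.exp (β * (c + l) * q)) l := by
  unfold FF
  exact HasDerivAt.fun_sum fun q hq => hasDerivAt_expdiv hβ hq c l

end PiQAux

open PiQAux

/-- The Legendre transform `π*_{Q,λ}(t) = sup_{y<0}(t·y - π_{Q,λ}(y))` is a
decreasing function of `λ ≥ 0`, with λ-derivative
`-Σ_{q=1}^{Q} e^{β(y_{Q,λ}(t)+λ)q} < 0`, where `y_{Q,λ}(t)` is the unique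
solution of `t = π'_{Q,λ}(y)`. -/
theorem piQstar_decreasing_in_lambda (β t : ℝ) (Q : ℕ) (hβ : 0 < β) (ht : 0 < t)
    (hQ : 1 ≤ Q)
    (yfun : ℝ → ℝ)
    (hy : ∀ lam ≥ (0 : ℝ), yfun lam < 0 ∧ piQ' β lam Q (yfun lam) = t) :
    StrictAntiOn (fun lam => sSup ((fun y => t * y - piQ β lam Q y) '' Iio (0 : ℝ)))
      (Ici (0 : ℝ)) ∧
    (∀ lam ≥ (0 : ℝ),
      HasDerivWithinAt (fun l => sSup ((fun y => t * y - piQ β l Q y) '' Iio (0 : ℝ)))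
        (-(∑ q ∈ Finset.Icc 1 Q, Real.exp (β * (yfun lam + lam) * q))) (Ici 0) lam ∧
      -(∑ q ∈ Finset.Icc 1 Q, Real.exp (β * (yfun lam + lam) * q)) < 0) := by
  have hpsi : ∀ lam ≥ (0:ℝ), psi β Q lam (yfun lam) = t := fun lam hl => by
    rw [← piQ'_eq_psi' lam hβ (hy lam hl).1]; exact (hy lam hl).2
  -- the sup is attained at yfun lam
  have hgreat : ∀ lam ≥ (0:ℝ), IsGreatest ((fun y => t * y - piQ β lam Q y) '' Iio 0)
      (t * yfun lam - piQ β lam Q (yfun lam)) := by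
    intro lam hl
    obtain ⟨hy0, -⟩ := hy lam hl
    refine ⟨mem_image_of_mem _ hy0, ?_⟩
    rintro _ ⟨y, hy1, rfl⟩
    have hy1 : y < 0 := hy1
    set g : ℝ → ℝ := fun z => t * z - piQ β lam Q z with hgdef
    show g y ≤ g (yfun lam)
    have hgder : ∀ z ∈ Iio (0:ℝ), HasDerivAt g (t - psi β Q lam z) z := by
      intro z hz
      rw [hgdef]
      simpa using ((hasDerivAt_id z).const_mul t).fun_sub (hasDerivAt_piQ hβ lam hz)
    rcases lt_trichotomy y (yfun lam) with h | h | h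
    · have hsub : Icc y (yfun lam) ⊆ Iio 0 := fun z hz => lt_of_le_of_lt hz.2 hy0
      have hcont : ContinuousOn g (Icc y (yfun lam)) := fun z hz =>
        (hgder z (hsub hz)).continuousAt.continuousWithinAt
      obtain ⟨c, hc, hceq⟩ := exists_hasDerivAt_eq_slope g (fun z => t - psi β Q lam z) h hcont
        (fun z hz => hgder z (hsub (Ioo_subset_Icc_self hz)))
      have hc0 : c < 0 := hsub (Ioo_subset_Icc_self hc)
      have hlt : psi β Q lam c < t := by
        rw [← hpsi lam hl]
        exact psi_strictMonoOn hβ hQ lam hc0 hy0 hc.2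
      have hpos : 0 < (g (yfun lam) - g y) / (yfun lam - y) := by rw [← hceq]; linarith
      have hden : (0:ℝ) < yfun lam - y := by linarith
      rw [lt_div_iff₀ hden] at hpos
      linarith
    · rw [h]
    · have hsub : Icc (yfun lam) y ⊆ Iio 0 := fun z hz => lt_of_le_of_lt hz.2 hy1
      have hcont : ContinuousOn g (Icc (yfun lam) y) := fun z hz =>
        (hgder z (hsub hz)).continuousAt.continuousWithinAt
      obtain ⟨c, hc, hceq⟩ := exists_hasDerivAt_eq_slope g (fun z => t - psi β Q lam z) h hcont
        (fun z hz => hgder z (hsub (Ioo_subset_Icc_self hz)))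
      have hc0 : c < 0 := hsub (Ioo_subset_Icc_self hc)
      have hlt : t < psi β Q lam c := by
        rw [← hpsi lam hl]
        exact psi_strictMonoOn hβ hQ lam hy0 hc0 hc.1
      have hneg : (g y - g (yfun lam)) / (y - yfun lam) < 0 := by rw [← hceq]; linarith
      have hden : (0:ℝ) < y - yfun lam := by linarith
      rw [div_lt_iff₀ hden] at hneg
      linarith
  set f : ℝ → ℝ := fun l => sSup ((fun y => t * y - piQ β l Q y) '' Iio (0:ℝ)) with hfdef
  have hsup : ∀ lam ≥ (0:ℝ), f lam = t * yfun lam - piQ β lam Q (yfun lam) :=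
    fun lam hl => (hgreat lam hl).csSup_eq
  constructor
  · -- strict antitonicity
    intro l1 h1 l2 h2 h12
    have h1' : (0:ℝ) ≤ l1 := h1
    have h2' : (0:ℝ) ≤ l2 := h2
    show f l2 < f l1
    rw [hsup l2 h2', ]
    have hy2 : yfun l2 < 0 := (hy l2 h2').1
    have key : piQ β l1 Q (yfun l2) < piQ β l2 Q (yfun l2) := by
      simp only [piQ]
      apply add_lt_add_left
      apply Finset.sum_lt_sum_of_nonempty (Finset.nonempty_Icc.2 hQ)
      intro q hq
      have hq1 : (1:ℝ) ≤ (q:ℝ) := by exact_mod_cast (Finset.mem_Icc.1 hq).1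
      have hqpos : (0:ℝ) < (q:ℝ) := by linarith
      have hβq : (0:ℝ) < β * q := by positivity
      rw [div_lt_div_iff₀ hβq hβq]
      have : β * (yfun l2 + l1) * q < β * (yfun l2 + l2) * q := by
        nlinarith [mul_pos (mul_pos hβ (sub_pos.2 h12)) hqpos]
      nlinarith [Real.exp_lt_exp.2 this, Real.exp_pos (β * (yfun l2 + l1) * q)]
    have hub : t * yfun l2 - piQ β l1 Q (yfun l2) ≤ f l1 :=
      le_csSup (hgreat l1 h1').bddAbove (mem_image_of_mem _ hy2)
    linarith
  · -- derivative part
    intro lam hlam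
    obtain ⟨hy0, -⟩ := hy lam hlam
    have hDneg : -(∑ q ∈ Finset.Icc 1 Q, Real.exp (β * (yfun lam + lam) * q)) < 0 := by
      rw [neg_lt_zero]
      exact Finset.sum_pos (fun q _ => Real.exp_pos _) (Finset.nonempty_Icc.2 hQ)
    refine ⟨?_, hDneg⟩
    rw [hasDerivWithinAt_iff_tendsto_slope]
    set Φ := 𝓝[Ici (0:ℝ) \ {lam}] lam with hΦ
    have hΦle : Φ ≤ 𝓝[{lam}ᶜ] lam := nhdsWithin_mono _ (fun x hx => hx.2)
    -- continuity of yfun at lam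
    have hyt : Tendsto yfun Φ (𝓝 (yfun lam)) := by
      rw [hΦ, Metric.tendsto_nhdsWithin_nhds]
      intro ε hε
      set ε' := min ε (-(yfun lam)/2) with hε'
      have hε'pos : 0 < ε' := lt_min hε (by linarith)
      have hε'le : ε' ≤ -(yfun lam)/2 := min_le_right _ _
      have hylo : yfun lam - ε' < 0 := by linarith
      have hyhi : yfun lam + ε' < 0 := by linarith
      have hlt1 : psi β Q lam (yfun lam - ε') < t := by
        rw [← hpsi lam hlam]
        exact psi_strictMonoOn hβ hQ lam hylo hy0 (by linarith)
      have hlt2 : t < psi β Q lam (yfun lam + ε') := by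
        rw [← hpsi lam hlam]
        exact psi_strictMonoOn hβ hQ lam hy0 hyhi (by linarith)
      have hev : ∀ᶠ μ in 𝓝 lam,
          psi β Q μ (yfun lam - ε') < t ∧ t < psi β Q μ (yfun lam + ε') :=
        (((psi_cont (yfun lam - ε')).tendsto lam).eventually_lt_const hlt1).and
          (((psi_cont (yfun lam + ε')).tendsto lam).eventually_const_lt hlt2)
      obtain ⟨δ, hδ, hδprop⟩ := Metric.eventually_nhds_iff.1 hev
      refine ⟨δ, hδ, fun μ hμmem hμdist => ?_⟩
      obtain ⟨hlo, hhi⟩ := hδprop hμdist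
      have hμ0 : (0:ℝ) ≤ μ := hμmem.1
      have hyμ : yfun μ < 0 := (hy μ hμ0).1
      have hψμ : psi β Q μ (yfun μ) = t := hpsi μ hμ0
      have hmono := (psi_strictMonoOn hβ hQ μ).monotoneOn
      have hgt : yfun lam - ε' < yfun μ := by
        by_contra hcon
        push_neg at hcon
        have := hmono (mem_Iio.2 hyμ) (mem_Iio.2 hylo) hcon
        linarith
      have hlt' : yfun μ < yfun lam + ε' := by
        by_contra hcon
        push_neg at hcon
        have := hmono (mem_Iio.2 hyhi) (mem_Iio.2 hyμ) hcon
        linarith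
      have habs : |yfun μ - yfun lam| < ε' := abs_lt.2 ⟨by linarith, by linarith⟩
      calc dist (yfun μ) (yfun lam) = |yfun μ - yfun lam| := Real.dist_eq _ _
        _ < ε' := habs
        _ ≤ ε := min_le_left _ _
    -- the two slope bounds
    set a : ℝ → ℝ := slope (fun s => -(FF β Q s (yfun lam))) lam with hadef
    set b : ℝ → ℝ := fun μ => -∑ q ∈ Finset.Icc 1 Q,
      Real.exp (β * yfun μ * q) * slope (fun s => Real.exp (β * (0 + s) * q) / (β * q)) lam μ
      with hbdef
    have ha : Tendsto a Φ (𝓝 (-(∑ q ∈ Finset.Icc 1 Q, Real.exp (β * (yfun lam + lam) * q)))) := by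
      have hda : HasDerivAt (fun s => -(FF β Q s (yfun lam)))
          (-(∑ q ∈ Finset.Icc 1 Q, Real.exp (β * (yfun lam + lam) * q))) lam :=
        (hasDerivAt_FF hβ (yfun lam) lam).neg
      exact (hasDerivAt_iff_tendsto_slope.1 hda).mono_left hΦle
    have hb : Tendsto b Φ (𝓝 (-(∑ q ∈ Finset.Icc 1 Q, Real.exp (β * (yfun lam + lam) * q)))) := by
      have hterm : ∀ q ∈ Finset.Icc 1 Q, Tendsto (fun μ => Real.exp (β * yfun μ * q) *
          slope (fun s => Real.exp (β * (0 + s) * q) / (β * q)) lam μ) Φ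
          (𝓝 (Real.exp (β * (yfun lam + lam) * q))) := by
        intro q hq
        have h1 : Tendsto (fun μ => Real.exp (β * yfun μ * q)) Φ
            (𝓝 (Real.exp (β * yfun lam * q))) :=
          ((Real.continuous_exp.comp (by fun_prop : Continuous fun y : ℝ => β * y * (q:ℝ))).tendsto
            (yfun lam)).comp hyt
        have h2 : Tendsto (slope (fun s => Real.exp (β * (0 + s) * q) / (β * q)) lam) Φ
            (𝓝 (Real.exp (β * (0 + lam) * q))) :=
          (hasDerivAt_iff_tendsto_slope.1 (hasDerivAt_expdiv hβ hq 0 lam)).mono_left hΦle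
        have h3 := h1.mul h2
        rw [zero_add, ← Real.exp_add] at h3
        convert h3 using 2
        ring
      exact (tendsto_finset_sum (Finset.Icc 1 Q) hterm).neg
    -- identifications of a and b as difference quotients
    have haeq : ∀ μ : ℝ, a μ = -((FF β Q μ (yfun lam) - FF β Q lam (yfun lam)) / (μ - lam)) := by
      intro μ
      rw [hadef, slope_def_field]
      ring
    have hbeq : ∀ μ : ℝ, b μ = -((FF β Q μ (yfun μ) - FF β Q lam (yfun μ)) / (μ - lam)) := by
      intro μ
      rw [hbdef]
      simp only [FF]
      rw [neg_eq_iff_eq_neg, neg_neg, ← Finset.sum_sub_distrib, Finset.sum_div]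
      refine Finset.sum_congr rfl fun q hq => ?_
      rw [slope_def_field]
      rw [show β * (yfun μ + μ) * (q:ℝ) = β * yfun μ * q + β * (0 + μ) * q by ring,
          show β * (yfun μ + lam) * (q:ℝ) = β * yfun μ * q + β * (0 + lam) * q by ring,
          Real.exp_add, Real.exp_add]
      ring
    -- bounds on the difference of sups
    have hlow : ∀ μ ∈ Ici (0:ℝ), -(FF β Q μ (yfun lam) - FF β Q lam (yfun lam)) ≤ f μ - f lam := by
      intro μ hμ
      have h1 : t * yfun lam - piQ β μ Q (yfun lam) ≤ f μ :=
        le_csSup (hgreat μ hμ).bddAbove (mem_image_of_mem _ hy0)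
      have h2 : f lam = t * yfun lam - piQ β lam Q (yfun lam) := hsup lam hlam
      have h3 := piQ_sub (β := β) (Q := Q) lam μ (yfun lam)
      linarith
    have hhigh : ∀ μ ∈ Ici (0:ℝ), f μ - f lam ≤ -(FF β Q μ (yfun μ) - FF β Q lam (yfun μ)) := by
      intro μ hμ
      have h1 : t * yfun μ - piQ β lam Q (yfun μ) ≤ f lam :=
        le_csSup (hgreat lam hlam).bddAbove (mem_image_of_mem _ (hy μ hμ).1)
      have h2 : f μ = t * yfun μ - piQ β μ Q (yfun μ) := hsup μ hμ
      have h3 := piQ_sub (β := β) (Q := Q) lam μ (yfun μ)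
      linarith
    -- squeeze
    have hminmax : ∀ μ ∈ Ici (0:ℝ) \ {lam},
        min (a μ) (b μ) ≤ slope f lam μ ∧ slope f lam μ ≤ max (a μ) (b μ) := by
      intro μ hμ
      obtain ⟨hμ0, hμne⟩ := hμ
      have hne : μ ≠ lam := hμne
      have hA := hlow μ hμ0
      have hB := hhigh μ hμ0
      rw [slope_def_field]
      have haeq' : a μ = (-(FF β Q μ (yfun lam) - FF β Q lam (yfun lam))) / (μ - lam) := by
        rw [haeq μ, neg_div]
      have hbeq' : b μ = (-(FF β Q μ (yfun μ) - FF β Q lam (yfun μ))) / (μ - lam) := by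
        rw [hbeq μ, neg_div]
      rcases lt_or_gt_of_ne hne with hlt | hgt
      · have hc : μ - lam < 0 := by linarith
        constructor
        · exact le_trans (min_le_right _ _)
            (by rw [hbeq']; exact div_le_div_of_neg hc hB)
        · exact le_trans (by rw [haeq']; exact div_le_div_of_neg hc hA) (le_max_left _ _)
      · have hc : (0:ℝ) < μ - lam := by linarith
        constructor
        · exact le_trans (min_le_left _ _)
            (by rw [haeq']; exact (div_le_div_iff_of_pos_right hc).2 hA)
        · exact le_trans (by rw [hbeq']; exact (div_le_div_iff_of_pos_right hc).2 hB) (le_max_right _ _)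
    exact tendsto_of_tendsto_of_tendsto_of_le_of_le'
      (g := fun μ => min (a μ) (b μ)) (h := fun μ => max (a μ) (b μ))
      (by simpa using ha.min hb) (by simpa using ha.max hb)
      (eventually_mem_nhdsWithin.mono fun μ hμ => (hminmax μ hμ).1)
      (eventually_mem_nhdsWithin.mono fun μ hμ => (hminmax μ hμ).2)
end

section
/- For fixed Q ∈ ℕ, β > 0 and t > 0, the Legendre transform λ ↦ π^*_{Q,λ}(t) is concave in λ on [0,∞): its second λ-derivative equals -[(∂²π_{Q,λ}/∂λ²)(y) · π''_{Q,λ}(y) - ((∂π'_{Q,λ}/∂λ)(y))²]/π''_{Q,λ}(y) evaluated at y = y_{Q,λ}(t), which is ≤ 0 by the Cauchy–Schwarz inequality applied to the weighted sums Σ_{q=1}^{Q} q e^{β(y+λ)q} and Σ_{q=1}^∞ q e^{βyq}-type terms. -/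
open Set
open scoped BigOperators

/-- `∂π'_{Q,λ}/∂λ = ∂²π_{Q,λ}/∂λ² = β Σ_{q=1}^{Q} q e^{β(y+λ)q}`. -/
noncomputable def dLamPiQ' (β lam : ℝ) (Q : ℕ) (y : ℝ) : ℝ :=
  β * ∑ q ∈ Finset.Icc 1 Q, (q : ℝ) * Real.exp (β * (y + lam) * q)

/-- `π''_{Q,λ}(y) = β (Σ_{q=1}^{Q} q e^{β(y+λ)q} + Σ_{q=Q+1}^∞ q e^{βyq})`. -/
noncomputable def piQ'' (β lam : ℝ) (Q : ℕ) (y : ℝ) : ℝ :=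
  β * ((∑ q ∈ Finset.Icc 1 Q, (q : ℝ) * Real.exp (β * (y + lam) * q)) +
    ∑' q : ℕ, ((q + Q + 1 : ℕ) : ℝ) * Real.exp (β * y * ((q + Q + 1 : ℕ) : ℝ)))

open Real Filter Asymptotics

section geom
variable {β y : ℝ} (Q : ℕ)

lemma term_eq (q : ℕ) : Real.exp (β * y * ((q + Q + 1 : ℕ) : ℝ))
    = Real.exp (β*y) ^ (Q+1) * Real.exp (β*y) ^ q := by
  rw [← Real.exp_nat_mul, ← Real.exp_nat_mul, ← Real.exp_add]
  congr 1
  push_cast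
  ring

lemma hr_pos : (0:ℝ) < Real.exp (β*y) := Real.exp_pos _

lemma hr_lt_one (hβ : 0 < β) (hy : y < 0) : Real.exp (β*y) < 1 := by
  rw [Real.exp_lt_one_iff]; nlinarith

lemma one_sub_r_pos (hβ : 0 < β) (hy : y < 0) : 0 < 1 - Real.exp (β*y) := by
  have := hr_lt_one (β:=β) (y:=y) hβ hy; linarith

lemma summable_exp_shift (hβ : 0 < β) (hy : y < 0) :
    Summable (fun q : ℕ => Real.exp (β * y * ((q + Q + 1 : ℕ) : ℝ))) := by
  have h1 := hr_lt_one (y := y) hβ hy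
  have := (summable_geometric_of_lt_one (le_of_lt (hr_pos (β:=β) (y:=y))) h1).mul_left
    (Real.exp (β*y) ^ (Q+1))
  refine this.congr fun q => ?_
  rw [term_eq]

lemma tsum_exp_shift (hβ : 0 < β) (hy : y < 0) :
    ∑' q : ℕ, Real.exp (β * y * ((q + Q + 1 : ℕ) : ℝ))
      = Real.exp (β*y) ^ (Q+1) * (1 - Real.exp (β*y))⁻¹ := by
  have h1 := hr_lt_one (y := y) hβ hy
  rw [show (fun q : ℕ => Real.exp (β * y * ((q + Q + 1 : ℕ) : ℝ)))
      = fun q : ℕ => Real.exp (β*y) ^ (Q+1) * Real.exp (β*y) ^ q from funext (term_eq Q),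
    tsum_mul_left, tsum_geometric_of_lt_one (le_of_lt (hr_pos (β:=β) (y:=y))) h1]

lemma summable_mul_exp_shift (hβ : 0 < β) (hy : y < 0) :
    Summable (fun q : ℕ => ((q + Q + 1 : ℕ) : ℝ) * Real.exp (β * y * ((q + Q + 1 : ℕ) : ℝ))) := by
  have h1 := hr_lt_one (y := y) hβ hy
  have h0 := hr_pos (β:=β) (y:=y)
  have hs1 : Summable (fun q : ℕ => (q:ℝ) * Real.exp (β*y) ^ q) := by
    have := summable_pow_mul_geometric_of_norm_lt_one 1 (r := Real.exp (β*y))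
      (by rwa [Real.norm_eq_abs, abs_of_pos h0])
    exact this.congr fun q => by simp
  have hs2 : Summable (fun q : ℕ => ((Q:ℝ)+1) * Real.exp (β*y) ^ q) :=
    (summable_geometric_of_lt_one h0.le h1).mul_left _
  have := ((hs1.add hs2).mul_left (Real.exp (β*y) ^ (Q+1)))
  refine this.congr fun q => ?_
  rw [term_eq]
  push_cast
  ring

lemma tsum_mul_exp_shift (hβ : 0 < β) (hy : y < 0) :
    ∑' q : ℕ, ((q + Q + 1 : ℕ) : ℝ) * Real.exp (β * y * ((q + Q + 1 : ℕ) : ℝ))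
      = Real.exp (β*y) ^ (Q+1) * (Real.exp (β*y) / (1 - Real.exp (β*y))^2
          + ((Q:ℝ)+1) * (1 - Real.exp (β*y))⁻¹) := by
  have h1 := hr_lt_one (y := y) hβ hy
  have h0 := hr_pos (β:=β) (y:=y)
  have hs1 : Summable (fun q : ℕ => (q:ℝ) * Real.exp (β*y) ^ q) := by
    have := summable_pow_mul_geometric_of_norm_lt_one 1 (r := Real.exp (β*y))
      (by rwa [Real.norm_eq_abs, abs_of_pos h0])
    exact this.congr fun q => by simp
  have hs2 : Summable (fun q : ℕ => ((Q:ℝ)+1) * Real.exp (β*y) ^ q) :=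
    (summable_geometric_of_lt_one h0.le h1).mul_left _
  have heq : (fun q : ℕ => ((q + Q + 1 : ℕ) : ℝ) * Real.exp (β * y * ((q + Q + 1 : ℕ) : ℝ)))
      = fun q : ℕ => Real.exp (β*y) ^ (Q+1) *
          ((q:ℝ) * Real.exp (β*y) ^ q + ((Q:ℝ)+1) * Real.exp (β*y) ^ q) := by
    funext q; rw [term_eq]; push_cast; ring
  rw [heq, tsum_mul_left, hs1.tsum_add hs2, tsum_mul_left,
    tsum_geometric_of_lt_one h0.le h1]
  congr 2
  have := tsum_coe_mul_geometric_of_norm_lt_one (𝕜 := ℝ) (r := Real.exp (β*y))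
    (by rwa [Real.norm_eq_abs, abs_of_pos h0])
  simpa using this

end geom

noncomputable def Scl (β lam : ℝ) (Q : ℕ) (y : ℝ) : ℝ :=
  (∑ q ∈ Finset.Icc 1 Q, Real.exp (β * (y + lam) * q)) +
    Real.exp (β*y) ^ (Q+1) * (1 - Real.exp (β*y))⁻¹

lemma piQ'_eq_Scl {β y : ℝ} (lam : ℝ) (Q : ℕ) (hβ : 0 < β) (hy : y < 0) :
    piQ' β lam Q y = Scl β lam Q y := by
  unfold piQ' Scl
  rw [tsum_exp_shift Q hβ hy]

lemma hasDerivAt_finsum_lam (β y lam : ℝ) (Q : ℕ) :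
    HasDerivAt (fun l => ∑ q ∈ Finset.Icc 1 Q, Real.exp (β * (y + l) * q))
      (∑ q ∈ Finset.Icc 1 Q, β * q * Real.exp (β * (y + lam) * q)) lam := by
  apply HasDerivAt.fun_sum
  intro q _
  have h0 : HasDerivAt (fun l : ℝ => β * (y + l) * q) (β * q) lam := by
    have := (((hasDerivAt_id lam).const_add y).const_mul β).mul_const (q:ℝ)
    simpa using this
  have := h0.exp
  refine this.congr_deriv (Eq.symm ?_)
  ring

lemma hasDerivAt_Scl_lam (β lam y : ℝ) (Q : ℕ) :
    HasDerivAt (fun l => Scl β l Q y) (dLamPiQ' β lam Q y) lam := by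
  unfold Scl dLamPiQ'
  have h := (hasDerivAt_finsum_lam β y lam Q).add_const
    (Real.exp (β*y) ^ (Q+1) * (1 - Real.exp (β*y))⁻¹)
  refine h.congr_deriv (Eq.symm ?_)
  rw [Finset.mul_sum]
  exact Finset.sum_congr rfl fun q _ => by ring

lemma hasDerivAt_finsum_y (β y lam : ℝ) (Q : ℕ) :
    HasDerivAt (fun z => ∑ q ∈ Finset.Icc 1 Q, Real.exp (β * (z + lam) * q))
      (∑ q ∈ Finset.Icc 1 Q, β * q * Real.exp (β * (y + lam) * q)) y := by
  apply HasDerivAt.fun_sum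
  intro q _
  have h0 : HasDerivAt (fun z : ℝ => β * (z + lam) * q) (β * q) y := by
    have := (((hasDerivAt_id y).add_const lam).const_mul β).mul_const (q:ℝ)
    simpa using this
  have := h0.exp
  refine this.congr_deriv (Eq.symm ?_)
  ring

lemma hasDerivAt_geom_y {β y : ℝ} (Q : ℕ) (hβ : 0 < β) (hy : y < 0) :
    HasDerivAt (fun z => Real.exp (β*z) ^ (Q+1) * (1 - Real.exp (β*z))⁻¹)
      (β * (Real.exp (β*y) ^ (Q+1) * (Real.exp (β*y) / (1 - Real.exp (β*y))^2
          + ((Q:ℝ)+1) * (1 - Real.exp (β*y))⁻¹))) y := by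
  have hr : HasDerivAt (fun z => Real.exp (β*z)) (Real.exp (β*y) * β) y := by
    simpa using ((hasDerivAt_id y).const_mul β).exp
  have hpow := hr.pow (Q+1)
  have hne := (one_sub_r_pos hβ hy).ne'
  have hinv := ((hasDerivAt_const y (1:ℝ)).sub hr).inv hne
  have h := hpow.mul hinv
  refine h.congr_deriv (Eq.symm ?_)
  simp only [Pi.inv_apply, Pi.sub_apply, Pi.pow_apply, Nat.add_sub_cancel, Nat.cast_add, Nat.cast_one]
  field_simp
  ring

lemma hasDerivAt_Scl_y {β y : ℝ} (lam : ℝ) (Q : ℕ) (hβ : 0 < β) (hy : y < 0) :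
    HasDerivAt (fun z => Scl β lam Q z) (piQ'' β lam Q y) y := by
  have h := (hasDerivAt_finsum_y β y lam Q).add (hasDerivAt_geom_y Q hβ hy)
  unfold Scl
  refine h.congr_deriv (Eq.symm ?_)
  unfold piQ''
  rw [tsum_mul_exp_shift Q hβ hy, mul_add, Finset.mul_sum]
  congr 1
  exact Finset.sum_congr rfl fun q _ => by ring

lemma tsum_mul_exp_pos {β y : ℝ} (Q : ℕ) (hβ : 0 < β) (hy : y < 0) :
    0 < ∑' q : ℕ, ((q + Q + 1 : ℕ) : ℝ) * Real.exp (β * y * ((q + Q + 1 : ℕ) : ℝ)) := by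
  apply Summable.tsum_pos (summable_mul_exp_shift Q hβ hy)
    (fun q => mul_nonneg (Nat.cast_nonneg _) (Real.exp_pos _).le) 0
  exact mul_pos (by exact_mod_cast Nat.succ_pos (0+Q)) (Real.exp_pos _)

lemma piQ''_pos {β y : ℝ} (lam : ℝ) (Q : ℕ) (hβ : 0 < β) (hy : y < 0) :
    0 < piQ'' β lam Q y := by
  unfold piQ''
  apply mul_pos hβ
  apply add_pos_of_nonneg_of_pos
  · exact Finset.sum_nonneg fun q _ => mul_nonneg (Nat.cast_nonneg _) (Real.exp_pos _).le
  · exact tsum_mul_exp_pos Q hβ hy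

lemma dLamPiQ'_nonneg {β y : ℝ} (lam : ℝ) (Q : ℕ) (hβ : 0 < β) :
    0 ≤ dLamPiQ' β lam Q y :=
  mul_nonneg hβ.le (Finset.sum_nonneg fun q _ =>
    mul_nonneg (Nat.cast_nonneg _) (Real.exp_pos _).le)

lemma dLamPiQ'_lt_piQ'' {β y : ℝ} (lam : ℝ) (Q : ℕ) (hβ : 0 < β) (hy : y < 0) :
    dLamPiQ' β lam Q y < piQ'' β lam Q y := by
  unfold dLamPiQ' piQ''
  rw [mul_add]
  have := mul_pos hβ (tsum_mul_exp_pos Q hβ hy)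
  linarith

lemma piQ'_strictMonoOn {β : ℝ} (lam : ℝ) (Q : ℕ) (hβ : 0 < β) :
    StrictMonoOn (fun y => piQ' β lam Q y) (Iio (0:ℝ)) := by
  intro y1 h1 y2 h2 h12
  simp only [piQ', mem_Iio] at *
  apply add_lt_add_of_le_of_lt
  · refine Finset.sum_le_sum fun q _ => Real.exp_le_exp.mpr ?_
    have h0 : (0:ℝ) ≤ q := Nat.cast_nonneg q
    exact mul_le_mul_of_nonneg_right (by nlinarith) h0
  · refine Summable.tsum_lt_tsum (i := 0) (fun q => Real.exp_le_exp.mpr ?_)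
      (Real.exp_lt_exp.mpr ?_) (summable_exp_shift Q hβ h1) (summable_exp_shift Q hβ h2)
    · have h0 : (0:ℝ) < ((q + Q + 1 : ℕ) : ℝ) := by exact_mod_cast Nat.succ_pos (q+Q)
      exact mul_le_mul_of_nonneg_right (by nlinarith) h0.le
    · have h0 : (0:ℝ) < ((0 + Q + 1 : ℕ) : ℝ) := by exact_mod_cast Nat.succ_pos (0+Q)
      exact mul_lt_mul_of_pos_right (by nlinarith) h0


lemma implicit_hasDerivAt {F : ℝ×ℝ → ℝ} {f' : ℝ×ℝ →L[ℝ] ℝ} {φ : ℝ → ℝ} {l₀ : ℝ}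
    (hF : HasStrictFDerivAt F f' (l₀, φ l₀))
    (hb : f' (0,1) ≠ 0)
    (hφc : ContinuousAt φ l₀)
    (hconst : ∀ᶠ l in nhds l₀, F (l, φ l) = F (l₀, φ l₀)) :
    HasDerivAt φ (-(f' (1,0)) / f' (0,1)) l₀ := by
  set a := f' (1,0) with ha
  set b := f' (0,1) with hbdef
  set y₀ := φ l₀ with hy₀
  have happ : ∀ p : ℝ × ℝ, f' p = p.1 * a + p.2 * b := by
    intro p
    have : p = p.1 • ((1:ℝ),(0:ℝ)) + p.2 • ((0:ℝ),(1:ℝ)) := by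
      ext <;> simp
    rw [this, map_add, map_smul, map_smul]
    simp [smul_eq_mul]
    rfl
  have ht : Tendsto (fun l => ((l, φ l), (l₀, y₀))) (nhds l₀) (nhds ((l₀,y₀),(l₀,y₀))) := by
    exact ((continuousAt_id.prodMk hφc).tendsto).prodMk_nhds tendsto_const_nhds
  have h2 := hF.isLittleO.comp_tendsto ht
  -- h2 : (fun l => F (l, φ l) - F (l₀,y₀) - f' ((l,φ l) - (l₀,y₀))) =o[𝓝 l₀] fun l => (l,φ l) - (l₀,y₀)
  have h4 : (fun l => (l - l₀) * a + (φ l - y₀) * b) =o[nhds l₀]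
      (fun l => ((l - l₀, φ l - y₀) : ℝ × ℝ)) := by
    have hEq : (fun l => ((fun p : (ℝ×ℝ)×(ℝ×ℝ) => F p.1 - F p.2 - f' (p.1 - p.2)) ∘
        (fun l => ((l, φ l), (l₀, y₀)))) l) =ᶠ[nhds l₀]
        (fun l => -((l - l₀) * a + (φ l - y₀) * b)) := by
      filter_upwards [hconst] with l hl
      simp only [Function.comp_apply, hl, Prod.mk_sub_mk, happ]
      ring
    have := (h2.congr' hEq (by rfl)).neg_left
    simpa [Prod.mk_sub_mk, Function.comp_def] using this
  have hb0 : 0 < |b| := abs_pos.mpr hb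
  have h5 : (fun l => ((l - l₀, φ l - y₀) : ℝ × ℝ)) =O[nhds l₀] (fun l => l - l₀) := by
    have hbound := h4.def (half_pos hb0)
    refine IsBigO.of_bound (max 1 ((2*|a| + |b|)/|b|)) ?_
    filter_upwards [hbound] with l hl
    set δ := l - l₀
    set η := φ l - y₀
    have hnorm : ‖((δ, η) : ℝ × ℝ)‖ = max |δ| |η| := rfl
    rw [hnorm] at hl ⊢
    have h1 : |η| * |b| - |δ| * |a| ≤ |δ * a + η * b| := by
      have h := abs_sub_abs_le_abs_sub (η * b) (-(δ * a))
      rw [abs_neg, abs_mul, abs_mul, sub_neg_eq_add] at h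
      calc |η| * |b| - |δ| * |a| ≤ |η * b + δ * a| := h
        _ = |δ * a + η * b| := by rw [add_comm]
    have hl' : |δ * a + η * b| ≤ |b|/2 * max |δ| |η| := by
      simpa [Real.norm_eq_abs] using hl
    have hmax : max |δ| |η| ≤ |δ| + |η| :=
      max_le (le_add_of_nonneg_right (abs_nonneg _)) (le_add_of_nonneg_left (abs_nonneg _))
    have hkey : |η| * |b| ≤ |δ| * |a| + |b|/2 * (|δ| + |η|) := by
      have h2' : |δ * a + η * b| ≤ |b|/2 * (|δ| + |η|) :=
        hl'.trans (mul_le_mul_of_nonneg_left hmax (by positivity))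
      linarith [h1.trans h2']
    have hη : |η| ≤ (2*|a| + |b|)/|b| * |δ| := by
      rw [div_mul_eq_mul_div, le_div_iff₀ hb0]
      nlinarith
    rw [Real.norm_eq_abs]
    rcases max_cases |δ| |η| with ⟨h, _⟩ | ⟨h, _⟩
    · rw [h]
      calc |δ| ≤ 1 * |δ| := by linarith
        _ ≤ max 1 ((2*|a|+|b|)/|b|) * |δ| := by
            apply mul_le_mul_of_nonneg_right (le_max_left _ _) (abs_nonneg _)
    · rw [h]
      exact hη.trans (mul_le_mul_of_nonneg_right (le_max_right _ _) (abs_nonneg _))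
  have h6 := h4.trans_isBigO h5
  rw [hasDerivAt_iff_isLittleO]
  have h7 : (fun l => φ l - φ l₀ - (l - l₀) • (-a / b)) =ᶠ[nhds l₀]
      (fun l => (1/b) * ((l - l₀) * a + (φ l - y₀) * b)) := by
    apply Eventually.of_forall
    intro l
    simp only [smul_eq_mul, ← hy₀]
    field_simp
    ring
  exact (IsLittleO.congr' (h6.const_mul_left (1/b)) h7.symm (by rfl))

lemma hasDerivAt_T0 {β y : ℝ} (Q : ℕ) (hβ : 0 < β) (hy : y < 0) :
    HasDerivAt
      (fun z => ∑' q : ℕ, Real.exp (β * z * ((q + Q + 1 : ℕ) : ℝ)) / (β * ((q + Q + 1 : ℕ) : ℝ)))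
      (∑' q : ℕ, Real.exp (β * y * ((q + Q + 1 : ℕ) : ℝ))) y := by
  have hy2 : y/2 < 0 := by linarith
  have hmem : y ∈ Iio (y/2) := by rw [mem_Iio]; linarith
  apply hasDerivAt_tsum_of_isPreconnected
    (u := fun q : ℕ => Real.exp (β * (y/2) * ((q + Q + 1 : ℕ) : ℝ)))
    (g' := fun q z => Real.exp (β * z * ((q + Q + 1 : ℕ) : ℝ)))
    (summable_exp_shift Q hβ hy2) (isOpen_Iio (a := y/2)) (convex_Iio _).isPreconnected
    ?_ ?_ hmem ?_ hmem
  · intro q z _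
    have hn : (0:ℝ) < ((q + Q + 1 : ℕ) : ℝ) := by exact_mod_cast Nat.succ_pos (q+Q)
    have h0 : HasDerivAt (fun z : ℝ => β * z * ((q + Q + 1 : ℕ) : ℝ))
        (β * ((q + Q + 1 : ℕ) : ℝ)) z := by
      simpa using ((hasDerivAt_id z).const_mul β).mul_const ((q + Q + 1 : ℕ) : ℝ)
    have := h0.exp.div_const (β * ((q + Q + 1 : ℕ) : ℝ))
    refine this.congr_deriv (Eq.symm ?_)
    field_simp
  · intro q z hz
    rw [Real.norm_eq_abs, abs_of_pos (Real.exp_pos _)]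
    apply Real.exp_le_exp.mpr
    have hn : (0:ℝ) ≤ ((q + Q + 1 : ℕ) : ℝ) := Nat.cast_nonneg _
    have : z < y/2 := hz
    exact mul_le_mul_of_nonneg_right (by nlinarith) hn
  · apply Summable.of_nonneg_of_le (fun q => by positivity)
      (fun q => ?_) ((summable_exp_shift Q hβ hy).mul_left β⁻¹)
    have hn1 : (1:ℝ) ≤ ((q + Q + 1 : ℕ) : ℝ) := by exact_mod_cast Nat.succ_le_succ (Nat.zero_le _)
    rw [div_eq_mul_inv, mul_comm (β⁻¹)]
    apply mul_le_mul_of_nonneg_left _ (Real.exp_pos _).le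
    exact inv_anti₀ hβ (le_mul_of_one_le_right hβ.le hn1)

lemma hasDerivAt_piQ_y {β y : ℝ} (lam : ℝ) (Q : ℕ) (hβ : 0 < β) (hy : y < 0) :
    HasDerivAt (fun z => piQ β lam Q z) (piQ' β lam Q y) y := by
  unfold piQ piQ'
  refine HasDerivAt.add ?_ (hasDerivAt_T0 Q hβ hy)
  apply HasDerivAt.fun_sum
  intro q hq
  have hq1 : 1 ≤ q := (Finset.mem_Icc.mp hq).1
  have hn : (0:ℝ) < (q:ℝ) := by exact_mod_cast hq1
  have h0 : HasDerivAt (fun z : ℝ => β * (z + lam) * q) (β * q) y := by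
    simpa using (((hasDerivAt_id y).add_const lam).const_mul β).mul_const (q:ℝ)
  have := h0.exp.div_const (β * q)
  refine this.congr_deriv (Eq.symm ?_)
  field_simp

lemma legendre_sup_eq {β t y₀ : ℝ} (lam : ℝ) (Q : ℕ) (hβ : 0 < β) (hy₀ : y₀ < 0)
    (hpi : piQ' β lam Q y₀ = t) :
    sSup ((fun y => t * y - piQ β lam Q y) '' Iio (0:ℝ)) = t * y₀ - piQ β lam Q y₀ := by
  have hf : ∀ z ∈ Iio (0:ℝ), HasDerivAt (fun y => t * y - piQ β lam Q y)
      (t - piQ' β lam Q z) z := by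
    intro z hz
    have h1 : HasDerivAt (fun y : ℝ => t * y) t z := by
      simpa using (hasDerivAt_id z).const_mul t
    exact h1.sub (hasDerivAt_piQ_y lam Q hβ hz)
  apply IsGreatest.csSup_eq
  refine ⟨⟨y₀, hy₀, rfl⟩, ?_⟩
  rintro w ⟨y, hy, rfl⟩
  simp only [mem_Iio] at hy
  rcases lt_trichotomy y y₀ with h | h | h
  · have hsub : Icc y y₀ ⊆ Iio (0:ℝ) := fun z hz => lt_of_le_of_lt hz.2 hy₀
    have hmono := strictMonoOn_of_deriv_pos (convex_Icc y y₀)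
      (fun z hz => ((hf z (hsub hz)).continuousAt.continuousWithinAt))
      (fun z hz => ?_) (left_mem_Icc.mpr h.le) (right_mem_Icc.mpr h.le) h
    · exact hmono.le
    · rw [interior_Icc] at hz
      rw [(hf z (hsub (Ioo_subset_Icc_self hz))).deriv]
      have : piQ' β lam Q z < piQ' β lam Q y₀ :=
        piQ'_strictMonoOn lam Q hβ (hsub (Ioo_subset_Icc_self hz)) hy₀ hz.2
      rw [← hpi]; linarith
  · rw [h]
  · have hsub : Icc y₀ y ⊆ Iio (0:ℝ) := fun z hz => lt_of_le_of_lt hz.2 hy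
    have hanti := strictAntiOn_of_deriv_neg (convex_Icc y₀ y)
      (fun z hz => ((hf z (hsub hz)).continuousAt.continuousWithinAt))
      (fun z hz => ?_) (left_mem_Icc.mpr h.le) (right_mem_Icc.mpr h.le) h
    · exact hanti.le
    · rw [interior_Icc] at hz
      rw [(hf z (hsub (Ioo_subset_Icc_self hz))).deriv]
      have : piQ' β lam Q y₀ < piQ' β lam Q z :=
        piQ'_strictMonoOn lam Q hβ hy₀ (hsub (Ioo_subset_Icc_self hz)) hz.1
      rw [← hpi]; linarith

lemma yfun_contWithin {β t : ℝ} {Q : ℕ} {yfun : ℝ → ℝ} (hβ : 0 < β)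
    (hy : ∀ lam ≥ (0:ℝ), yfun lam < 0 ∧ piQ' β lam Q (yfun lam) = t)
    {l₀ : ℝ} (hl₀ : 0 ≤ l₀) :
    ContinuousWithinAt yfun (Ici (0:ℝ)) l₀ := by
  obtain ⟨hy0, hpi0⟩ := hy l₀ hl₀
  unfold ContinuousWithinAt
  rw [Metric.tendsto_nhds]
  intro ε hε
  set y₀ := yfun l₀ with hy₀def
  set m := min (ε/2) (-y₀/2) with hm
  have hm0 : 0 < m := lt_min (by linarith) (by linarith)
  have hmε : m ≤ ε/2 := min_le_left _ _
  have hyp : y₀ + m < 0 := by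
    have : m ≤ -y₀/2 := min_le_right _ _
    linarith
  have hym : y₀ - m < 0 := by linarith
  have hlow : piQ' β l₀ Q (y₀ - m) < t := by
    rw [← hpi0]
    exact piQ'_strictMonoOn l₀ Q hβ (mem_Iio.mpr hym) (mem_Iio.mpr hy0) (by linarith)
  have hhigh : t < piQ' β l₀ Q (y₀ + m) := by
    rw [← hpi0]
    exact piQ'_strictMonoOn l₀ Q hβ (mem_Iio.mpr hy0) (mem_Iio.mpr hyp) (by linarith)
  have hcont : ∀ c : ℝ, Continuous (fun l => piQ' β l Q c) := by
    intro c
    unfold piQ'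
    exact (continuous_finset_sum _ fun q _ => by fun_prop).add continuous_const
  have e1 : ∀ᶠ l in nhds l₀, piQ' β l Q (y₀ - m) < t :=
    (hcont (y₀ - m)).continuousAt.eventually_lt continuousAt_const hlow
  have e2 : ∀ᶠ l in nhds l₀, t < piQ' β l Q (y₀ + m) :=
    continuousAt_const.eventually_lt (hcont (y₀ + m)).continuousAt hhigh
  filter_upwards [(e1.and e2).filter_mono nhdsWithin_le_nhds,
    eventually_mem_nhdsWithin] with l hlt hl0mem
  obtain ⟨hyl, hpil⟩ := hy l hl0mem
  have h1 : y₀ - m < yfun l := by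
    by_contra hcon
    push_neg at hcon
    have hle : piQ' β l Q (yfun l) ≤ piQ' β l Q (y₀ - m) :=
      (piQ'_strictMonoOn l Q hβ).monotoneOn (mem_Iio.mpr hyl) (mem_Iio.mpr hym) hcon
    rw [hpil] at hle
    linarith [hlt.1]
  have h2 : yfun l < y₀ + m := by
    by_contra hcon
    push_neg at hcon
    have hle : piQ' β l Q (y₀ + m) ≤ piQ' β l Q (yfun l) :=
      (piQ'_strictMonoOn l Q hβ).monotoneOn (mem_Iio.mpr hyp) (mem_Iio.mpr hyl) hcon
    rw [hpil] at hle
    linarith [hlt.2]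
  rw [Real.dist_eq, abs_lt]
  constructor <;> [linarith; linarith]

/-- For fixed `Q`, `β > 0`, `t > 0`, the Legendre transform
`λ ↦ π*_{Q,λ}(t) = sup_{y<0}(t y - π_{Q,λ}(y))` is concave in `λ` on `[0,∞)`;
its second λ-derivative equals
`-[(∂²π/∂λ²)(y)·π''(y) - ((∂π'/∂λ)(y))²]/π''(y)` at `y = y_{Q,λ}(t)`,
which is `≤ 0`. -/
theorem piQstar_concave_in_lambda (β t : ℝ) (Q : ℕ) (hβ : 0 < β) (ht : 0 < t)
    (yfun : ℝ → ℝ)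
    (hy : ∀ lam ≥ (0 : ℝ), yfun lam < 0 ∧ piQ' β lam Q (yfun lam) = t) :
    ConcaveOn ℝ (Ici (0 : ℝ))
      (fun lam => sSup ((fun y => t * y - piQ β lam Q y) '' Iio (0 : ℝ))) ∧
    (∀ lam > (0 : ℝ),
      deriv (deriv (fun l => sSup ((fun y => t * y - piQ β l Q y) '' Iio (0 : ℝ)))) lam =
        -((dLamPiQ' β lam Q (yfun lam) * piQ'' β lam Q (yfun lam) -
            (dLamPiQ' β lam Q (yfun lam)) ^ 2) / piQ'' β lam Q (yfun lam)) ∧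
      -((dLamPiQ' β lam Q (yfun lam) * piQ'' β lam Q (yfun lam) -
          (dLamPiQ' β lam Q (yfun lam)) ^ 2) / piQ'' β lam Q (yfun lam)) ≤ 0) := by
  set Fs : ℝ → ℝ := fun lam => sSup ((fun y => t * y - piQ β lam Q y) '' Iio (0:ℝ)) with hFs
  set Φ : ℝ → ℝ := fun l => -∑ q ∈ Finset.Icc 1 Q, Real.exp (β * (yfun l + l) * q) with hΦ
  have hgeq : ∀ l ∈ Ici (0:ℝ), Fs l = t * yfun l - piQ β l Q (yfun l) := fun l hl =>
    legendre_sup_eq l Q hβ (hy l hl).1 (hy l hl).2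
  -- derivative of yfun
  have key : ∀ l₀ > (0:ℝ), HasDerivAt yfun
      (-(dLamPiQ' β l₀ Q (yfun l₀)) / piQ'' β l₀ Q (yfun l₀)) l₀ := by
    intro l₀ hl₀
    obtain ⟨hy0, hpi0⟩ := hy l₀ hl₀.le
    set y₀ := yfun l₀ with hy₀def
    set F : ℝ×ℝ → ℝ := fun p => Scl β p.1 Q p.2 with hFdef
    have hC : ContDiffAt ℝ 1 F (l₀, y₀) := by
      have hc1 : ContDiff ℝ 1 (fun p : ℝ×ℝ =>
          ∑ q ∈ Finset.Icc 1 Q, Real.exp (β * (p.2 + p.1) * q)) := by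
        apply ContDiff.sum
        intro q _
        exact Real.contDiff_exp.comp
          ((contDiff_const.mul (contDiff_snd.add contDiff_fst)).mul contDiff_const)
      have hexp : ContDiff ℝ 1 (fun p : ℝ×ℝ => Real.exp (β * p.2)) :=
        Real.contDiff_exp.comp (contDiff_const.mul contDiff_snd)
      have hc2 : ContDiffAt ℝ 1 (fun p : ℝ×ℝ =>
          Real.exp (β * p.2) ^ (Q+1) * (1 - Real.exp (β * p.2))⁻¹) (l₀, y₀) := by
        apply ContDiffAt.mul ((hexp.pow (Q+1)).contDiffAt)
        exact ContDiffAt.inv ((contDiff_const.sub hexp).contDiffAt) (one_sub_r_pos hβ hy0).ne'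
      exact hc1.contDiffAt.add hc2
    have hstrict := hC.hasStrictFDerivAt one_ne_zero
    have hl1 : HasDerivAt (fun l => F (l, y₀)) (fderiv ℝ F (l₀, y₀) (1, 0)) l₀ :=
      hstrict.hasFDerivAt.comp_hasDerivAt (f := fun l => (l, y₀)) l₀ ((hasDerivAt_id' l₀).prodMk (hasDerivAt_const l₀ y₀))
    have ha : fderiv ℝ F (l₀, y₀) (1, 0) = dLamPiQ' β l₀ Q y₀ :=
      hl1.unique (hasDerivAt_Scl_lam β l₀ y₀ Q)
    have hl2 : HasDerivAt (fun z => F (l₀, z)) (fderiv ℝ F (l₀, y₀) (0, 1)) y₀ :=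
      hstrict.hasFDerivAt.comp_hasDerivAt (f := fun z => (l₀, z)) y₀ ((hasDerivAt_const y₀ l₀).prodMk (hasDerivAt_id' y₀))
    have hb : fderiv ℝ F (l₀, y₀) (0, 1) = piQ'' β l₀ Q y₀ :=
      hl2.unique (hasDerivAt_Scl_y l₀ Q hβ hy0)
    have hB := piQ''_pos (y := y₀) l₀ Q hβ hy0
    have hconst : ∀ᶠ l in nhds l₀, F (l, yfun l) = F (l₀, yfun l₀) := by
      filter_upwards [eventually_gt_nhds hl₀] with l hl
      obtain ⟨hyl, hpil⟩ := hy l hl.le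
      show Scl β l Q (yfun l) = Scl β l₀ Q (yfun l₀)
      rw [← piQ'_eq_Scl l Q hβ hyl, ← piQ'_eq_Scl l₀ Q hβ hy0, hpil, hpi0]
    have hφc : ContinuousAt yfun l₀ :=
      (yfun_contWithin hβ hy hl₀.le).continuousAt (Ici_mem_nhds hl₀)
    have himp := implicit_hasDerivAt hstrict (by rw [hb]; exact hB.ne') hφc hconst
    rw [ha, hb] at himp
    exact himp
  -- first derivative of Fs on Ioi 0
  have hG' : ∀ l₀ > (0:ℝ), HasDerivAt Fs (Φ l₀) l₀ := by
    intro l₀ hl₀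
    obtain ⟨hy0, hpi0⟩ := hy l₀ hl₀.le
    have hyd := key l₀ hl₀
    set y' := -(dLamPiQ' β l₀ Q (yfun l₀)) / piQ'' β l₀ Q (yfun l₀) with hy'def
    have hu : HasDerivAt (fun l => yfun l + l) (y' + 1) l₀ := hyd.add (hasDerivAt_id l₀)
    have hsum : HasDerivAt (fun l => ∑ q ∈ Finset.Icc 1 Q, Real.exp (β*(yfun l + l)*q)/(β*q))
        (∑ q ∈ Finset.Icc 1 Q, Real.exp (β*(yfun l₀ + l₀)*q) * (β*(y'+1)*q)/(β*q)) l₀ := by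
      apply HasDerivAt.fun_sum
      intro q _
      have hin : HasDerivAt (fun l => β*(yfun l + l)*(q:ℝ)) (β*(y'+1)*q) l₀ := by
        simpa using (hu.const_mul β).mul_const (q:ℝ)
      exact hin.exp.div_const _
    have hT : HasDerivAt
        (fun l => ∑' q : ℕ, Real.exp (β * yfun l * ((q + Q + 1 : ℕ) : ℝ)) / (β * ((q + Q + 1 : ℕ) : ℝ)))
        ((∑' q : ℕ, Real.exp (β * yfun l₀ * ((q + Q + 1 : ℕ) : ℝ))) * y') l₀ :=
      (hasDerivAt_T0 Q hβ hy0).comp l₀ hyd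
    have htotal : HasDerivAt (fun l => t * yfun l - piQ β l Q (yfun l))
        (t * y' - ((∑ q ∈ Finset.Icc 1 Q, Real.exp (β*(yfun l₀ + l₀)*q) * (β*(y'+1)*q)/(β*q))
          + (∑' q : ℕ, Real.exp (β * yfun l₀ * ((q + Q + 1 : ℕ) : ℝ))) * y')) l₀ := by
      simp only [piQ]
      exact (hyd.const_mul t).sub (hsum.add hT)
    have hval : t * y' - ((∑ q ∈ Finset.Icc 1 Q, Real.exp (β*(yfun l₀ + l₀)*q) * (β*(y'+1)*q)/(β*q))
          + (∑' q : ℕ, Real.exp (β * yfun l₀ * ((q + Q + 1 : ℕ) : ℝ))) * y') = Φ l₀ := by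
      have hsimp : ∀ q ∈ Finset.Icc 1 Q,
          Real.exp (β*(yfun l₀ + l₀)*q) * (β*(y'+1)*q)/(β*q)
            = Real.exp (β*(yfun l₀ + l₀)*q) * (y'+1) := by
        intro q hq
        have hq1 : (1:ℝ) ≤ (q:ℝ) := by exact_mod_cast (Finset.mem_Icc.mp hq).1
        have hqne : (q:ℝ) ≠ 0 := by linarith
        field_simp
      rw [Finset.sum_congr rfl hsimp]
      have ht' : t = (∑ q ∈ Finset.Icc 1 Q, Real.exp (β*(yfun l₀ + l₀)*q))
          + ∑' q : ℕ, Real.exp (β * yfun l₀ * ((q + Q + 1 : ℕ) : ℝ)) := by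
        rw [← hpi0]; rfl
      rw [show Φ l₀ = -∑ q ∈ Finset.Icc 1 Q, Real.exp (β * (yfun l₀ + l₀) * q) from rfl,
        ht', ← Finset.sum_mul]
      ring
    have hGeqEv : Fs =ᶠ[nhds l₀] (fun l => t * yfun l - piQ β l Q (yfun l)) := by
      filter_upwards [eventually_gt_nhds hl₀] with l hl
      exact hgeq l hl.le
    exact (hval ▸ htotal).congr_of_eventuallyEq hGeqEv
  -- second derivative of Fs on Ioi 0
  have hΦ' : ∀ l₀ > (0:ℝ), HasDerivAt Φ
      (-((dLamPiQ' β l₀ Q (yfun l₀) * piQ'' β l₀ Q (yfun l₀) -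
          (dLamPiQ' β l₀ Q (yfun l₀)) ^ 2) / piQ'' β l₀ Q (yfun l₀))) l₀ := by
    intro l₀ hl₀
    obtain ⟨hy0, hpi0⟩ := hy l₀ hl₀.le
    have hyd := key l₀ hl₀
    set y' := -(dLamPiQ' β l₀ Q (yfun l₀)) / piQ'' β l₀ Q (yfun l₀) with hy'def
    have hu : HasDerivAt (fun l => yfun l + l) (y' + 1) l₀ := hyd.add (hasDerivAt_id l₀)
    have hsum : HasDerivAt (fun l => ∑ q ∈ Finset.Icc 1 Q, Real.exp (β*(yfun l + l)*q))
        (∑ q ∈ Finset.Icc 1 Q, Real.exp (β*(yfun l₀ + l₀)*q) * (β*(y'+1)*q)) l₀ := by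
      apply HasDerivAt.fun_sum
      intro q _
      have hin : HasDerivAt (fun l => β*(yfun l + l)*(q:ℝ)) (β*(y'+1)*q) l₀ := by
        simpa using (hu.const_mul β).mul_const (q:ℝ)
      exact hin.exp
    have hd := hsum.neg
    refine hd.congr_deriv (Eq.symm ?_)
    have hBpos := piQ''_pos (y := yfun l₀) l₀ Q hβ hy0
    have hsval : (∑ q ∈ Finset.Icc 1 Q, Real.exp (β*(yfun l₀ + l₀)*q) * (β*(y'+1)*q))
        = dLamPiQ' β l₀ Q (yfun l₀) * (y'+1) := by
      calc (∑ q ∈ Finset.Icc 1 Q, Real.exp (β*(yfun l₀ + l₀)*q) * (β*(y'+1)*q))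
          = ∑ q ∈ Finset.Icc 1 Q, (β * ((q:ℝ) * Real.exp (β*(yfun l₀ + l₀)*q))) * (y'+1) :=
            Finset.sum_congr rfl fun q _ => by ring
        _ = (β * ∑ q ∈ Finset.Icc 1 Q, (q:ℝ) * Real.exp (β*(yfun l₀ + l₀)*q)) * (y'+1) := by
            rw [Finset.mul_sum, ← Finset.sum_mul]
        _ = dLamPiQ' β l₀ Q (yfun l₀) * (y'+1) := rfl
    rw [hsval, hy'def]
    field_simp
    ring
  have hD2 : ∀ l₀ > (0:ℝ), HasDerivAt (deriv Fs)
      (-((dLamPiQ' β l₀ Q (yfun l₀) * piQ'' β l₀ Q (yfun l₀) -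
          (dLamPiQ' β l₀ Q (yfun l₀)) ^ 2) / piQ'' β l₀ Q (yfun l₀))) l₀ := by
    intro l₀ hl₀
    have hev : deriv Fs =ᶠ[nhds l₀] Φ := by
      filter_upwards [eventually_gt_nhds hl₀] with l hl
      exact (hG' l hl).deriv
    exact (hΦ' l₀ hl₀).congr_of_eventuallyEq hev
  have hneg : ∀ l₀ > (0:ℝ),
      -((dLamPiQ' β l₀ Q (yfun l₀) * piQ'' β l₀ Q (yfun l₀) -
          (dLamPiQ' β l₀ Q (yfun l₀)) ^ 2) / piQ'' β l₀ Q (yfun l₀)) ≤ 0 := by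
    intro l₀ hl₀
    obtain ⟨hy0, _⟩ := hy l₀ hl₀.le
    have hA := dLamPiQ'_nonneg (y := yfun l₀) l₀ Q hβ
    have hB := piQ''_pos (y := yfun l₀) l₀ Q hβ hy0
    have hAB := dLamPiQ'_lt_piQ'' (y := yfun l₀) l₀ Q hβ hy0
    have hnum : 0 ≤ dLamPiQ' β l₀ Q (yfun l₀) * piQ'' β l₀ Q (yfun l₀) -
        (dLamPiQ' β l₀ Q (yfun l₀)) ^ 2 := by nlinarith
    have := div_nonneg hnum hB.le
    linarith
  constructor
  · apply concaveOn_of_deriv2_nonpos (convex_Ici 0)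
    · -- continuity
      have hGcont : ContinuousOn (fun l => t * yfun l - piQ β l Q (yfun l)) (Ici (0:ℝ)) := ?_
      · exact hGcont.congr hgeq
      intro l hl
      have h1 : ContinuousWithinAt yfun (Ici (0:ℝ)) l := yfun_contWithin hβ hy hl
      apply ContinuousWithinAt.sub
      · exact continuousWithinAt_const.mul h1
      · simp only [piQ]
        apply ContinuousWithinAt.add
        · -- finite sum
          apply tendsto_finset_sum
          intro q _
          have hu : ContinuousWithinAt (fun l => β * (yfun l + l) * (q:ℝ)) (Ici (0:ℝ)) l :=
            (continuousWithinAt_const.mul (h1.add continuousWithinAt_id)).mul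
              continuousWithinAt_const
          exact (Real.continuous_exp.continuousAt.comp_continuousWithinAt hu).div_const _
        · exact (hasDerivAt_T0 Q hβ (hy l hl).1).continuousAt.comp_continuousWithinAt h1
    · rw [interior_Ici]
      intro l hl
      exact (hG' l hl).differentiableAt.differentiableWithinAt
    · rw [interior_Ici]
      intro l hl
      exact (hD2 l hl).differentiableAt.differentiableWithinAt
    · rw [interior_Ici]
      intro l hl
      have hit : deriv^[2] Fs l = deriv (deriv Fs) l := rfl
      rw [hit, (hD2 l hl).deriv]
      exact hneg l hl
  · intro lam hlam
    exact ⟨(hD2 lam hlam).deriv, hneg lam hlam⟩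
end
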